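/- Let σ and τ be permutations of {1,…,n} both avoiding the pattern 312. Then there exists a least upper bound μ of {σ, τ} in the right weak order on all permutations of {1,…,n}, and μ avoids 312; likewise there exists a greatest lower bound of {σ, τ} in the right weak order, and it avoids 312. Hence the 312-avoiding permutations form a sublattice of the right weak order (this sublattice is the Tamari lattice). -/

import Mathlib

/-- The set of (value) inversions of a permutation `σ` of `{1,…,n}`;
the right weak order is `σ ≤ τ` iff `invSet σ ⊆ invSet τ`. -/
def invSet (n : ℕ) (σ : Equiv.Perm (Fin n)) : Set (Fin n × Fin n) :=
  {p | p.1 < p.2 ∧ σ⁻¹ p.2 < σ⁻¹ p.1}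

/-- `σ` avoids the pattern 312: no positions `p < q < r` with `σ q < σ r < σ p`. -/
def Avoids312 (n : ℕ) (σ : Equiv.Perm (Fin n)) : Prop :=
  ¬ ∃ p q r : Fin n, p < q ∧ q < r ∧ σ q < σ r ∧ σ r < σ p

namespace Avoid312Aux

open Relation

variable {n : ℕ}

/-- The inversion relation of a permutation. -/
def relE (σ : Equiv.Perm (Fin n)) (a b : Fin n) : Prop := a < b ∧ σ⁻¹ b < σ⁻¹ a

lemma invSet_subset_iff {σ τ : Equiv.Perm (Fin n)} :
    invSet n σ ⊆ invSet n τ ↔ ∀ a b, relE σ a b → relE τ a b := by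
  constructor
  · intro h a b hab
    have hm : (a, b) ∈ invSet n σ := hab
    exact h hm
  · intro h p hp; exact h p.1 p.2 hp

lemma relE_cocls (σ : Equiv.Perm (Fin n)) :
    ∀ a b c, a < b → b < c → relE σ a c → relE σ a b ∨ relE σ b c := by
  intro a b c hab hbc hac
  rcases lt_or_ge (σ⁻¹ b) (σ⁻¹ a) with h | h
  · exact Or.inl ⟨hab, h⟩
  · exact Or.inr ⟨hbc, lt_of_lt_of_le hac.2 h⟩

lemma relE_av' {σ : Equiv.Perm (Fin n)} (hσ : Avoids312 n σ) :
    ∀ a b c, a < b → b < c → relE σ a c → relE σ a b := by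
  intro a b c hab hbc hac
  refine ⟨hab, ?_⟩
  by_contra h
  push_neg at h
  have hne : σ⁻¹ a ≠ σ⁻¹ b := fun he => absurd (σ⁻¹.injective he) hab.ne
  have hqr : σ⁻¹ a < σ⁻¹ b := lt_of_le_of_ne h hne
  exact hσ ⟨σ⁻¹ c, σ⁻¹ a, σ⁻¹ b, hac.2, hqr, by simpa using hab, by simpa using hbc⟩

lemma avoids_of_av' {σ : Equiv.Perm (Fin n)}
    (h : ∀ a b c, a < b → b < c → relE σ a c → relE σ a b) : Avoids312 n σ := by
  rintro ⟨p, q, r, hpq, hqr, h1, h2⟩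
  have hac : relE σ (σ q) (σ p) := ⟨h1.trans h2, by simpa using hpq⟩
  have := (h (σ q) (σ r) (σ p) h1 h2 hac).2
  simp only [Equiv.Perm.inv_def, Equiv.symm_apply_apply] at this
  exact absurd hqr (not_lt.mpr this.le)

section Closure

variable {e f : Fin n → Fin n → Prop}

lemma inc_tg (he : ∀ a b, e a b → a < b) (hf : ∀ a b, f a b → a < b) :
    ∀ a b : Fin n, TransGen (fun x y => e x y ∨ f x y) a b → a < b := by
  intro a b h
  induction h with
  | single h => rcases h with h | h; exacts [he _ _ h, hf _ _ h]
  | tail _ h ih => rcases h with h | h; exacts [ih.trans (he _ _ h), ih.trans (hf _ _ h)]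

lemma cocls_tg (hce : ∀ a b c, a < b → b < c → e a c → e a b ∨ e b c)
    (hcf : ∀ a b c, a < b → b < c → f a c → f a b ∨ f b c) :
    ∀ a b c : Fin n, a < b → TransGen (fun x y => e x y ∨ f x y) a c → b < c →
      TransGen (fun x y => e x y ∨ f x y) a b ∨ TransGen (fun x y => e x y ∨ f x y) b c := by
  intro a b c hab h
  induction h with
  | single h =>
    intro hbc
    rcases h with h | h
    · exact (hce a b _ hab hbc h).imp (fun h => TransGen.single (Or.inl h))
        (fun h => TransGen.single (Or.inl h))
    · exact (hcf a b _ hab hbc h).imp (fun h => TransGen.single (Or.inr h))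
        (fun h => TransGen.single (Or.inr h))
  | @tail m c h1 h2 ih =>
    intro hbc
    rcases lt_trichotomy b m with hbm | hbm | hbm
    · rcases ih hbm with h | h
      · exact Or.inl h
      · exact Or.inr (h.tail h2)
    · subst hbm; exact Or.inl h1
    · rcases h2 with h2 | h2
      · rcases hce m b c hbm hbc h2 with h | h
        · exact Or.inl (h1.tail (Or.inl h))
        · exact Or.inr (TransGen.single (Or.inl h))
      · rcases hcf m b c hbm hbc h2 with h | h
        · exact Or.inl (h1.tail (Or.inr h))
        · exact Or.inr (TransGen.single (Or.inr h))

lemma down_tg (hde : ∀ a b c, a < b → b < c → e a c → e a b)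
    (hdf : ∀ a b c, a < b → b < c → f a c → f a b) :
    ∀ a b c : Fin n, a < b → TransGen (fun x y => e x y ∨ f x y) a c → b < c →
      TransGen (fun x y => e x y ∨ f x y) a b := by
  intro a b c hab h
  induction h with
  | single h =>
    intro hbc
    rcases h with h | h
    · exact TransGen.single (Or.inl (hde a b _ hab hbc h))
    · exact TransGen.single (Or.inr (hdf a b _ hab hbc h))
  | @tail m c h1 h2 ih =>
    intro hbc
    rcases lt_trichotomy b m with hbm | hbm | hbm
    · exact ih hbm
    · subst hbm; exact h1
    · rcases h2 with h2 | h2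
      · exact h1.tail (Or.inl (hde m b c hbm hbc h2))
      · exact h1.tail (Or.inr (hdf m b c hbm hbc h2))

lemma up_tg (hue : ∀ a b c, e a b → b < c → e a c)
    (huf : ∀ a b c, f a b → b < c → f a c) :
    ∀ a b c : Fin n, TransGen (fun x y => e x y ∨ f x y) a b → b < c →
      TransGen (fun x y => e x y ∨ f x y) a c := by
  intro a b c h
  induction h generalizing c with
  | single h =>
    intro hbc
    rcases h with h | h
    · exact TransGen.single (Or.inl (hue _ _ _ h hbc))
    · exact TransGen.single (Or.inr (huf _ _ _ h hbc))
  | @tail m b h1 h2 ih =>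
    intro hbc
    rcases h2 with h2 | h2
    · exact h1.tail (Or.inl (hue _ _ _ h2 hbc))
    · exact h1.tail (Or.inr (huf _ _ _ h2 hbc))

lemma tg_subset {g : Fin n → Fin n → Prop} (hg : ∀ a b c, g a b → g b c → g a c)
    (hge : ∀ a b, e a b → g a b) (hgf : ∀ a b, f a b → g a b) :
    ∀ a b : Fin n, TransGen (fun x y => e x y ∨ f x y) a b → g a b := by
  intro a b h
  induction h with
  | single h => rcases h with h | h; exacts [hge _ _ h, hgf _ _ h]
  | tail _ h ih => rcases h with h | h; exacts [hg _ _ _ ih (hge _ _ h), hg _ _ _ ih (hgf _ _ h)]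

end Closure

/-- From a closed and co-closed relation contained in `<`, construct the permutation
having it as inversion relation. -/
lemma exists_perm (E : Fin n → Fin n → Prop)
    (hinc : ∀ a b, E a b → a < b)
    (hcls : ∀ a b c, E a b → E b c → E a c)
    (hcocls : ∀ a b c, a < b → b < c → E a c → E a b ∨ E b c) :
    ∃ μ : Equiv.Perm (Fin n), ∀ a b, relE μ a b ↔ E a b := by
  classical
  -- `prec x y` : `x` appears before `y` in the desired permutation
  set prec : Fin n → Fin n → Prop := fun x y => (x < y ∧ ¬ E x y) ∨ (y < x ∧ E y x) with hprec
  have hirr : ∀ x, ¬ prec x x := by simp [hprec]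
  have htrans : ∀ x y z, prec x y → prec y z → prec x z := by
    intro x y z hxy hyz
    rcases hxy with ⟨h1, h2⟩ | ⟨h1, h2⟩ <;> rcases hyz with ⟨h3, h4⟩ | ⟨h3, h4⟩
    · -- x < y, ¬E x y ; y < z, ¬E y z
      refine Or.inl ⟨h1.trans h3, fun h => ?_⟩
      rcases hcocls x y z h1 h3 h with h | h; exacts [h2 h, h4 h]
    · -- x < y, ¬E x y ; z < y, E z y
      rcases lt_trichotomy x z with h | h | h
      · exact Or.inl ⟨h, fun hxz => h2 (hcls x z y hxz h4)⟩
      · subst h; exact (h2 h4).elim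
      · exact Or.inr ⟨h, by
          rcases hcocls z x y h h1 h4 with hh | hh
          · exact hh
          · exact absurd hh h2⟩
    · -- y < x, E y x ; y < z, ¬E y z
      rcases lt_trichotomy x z with h | h | h
      · exact Or.inl ⟨h, fun hxz => h4 (hcls y x z h2 hxz)⟩
      · subst h; exact (h4 h2).elim
      · refine Or.inr ⟨h, ?_⟩
        rcases hcocls y z x h3 h h2 with hh | hh
        · exact absurd hh h4
        · exact hh
    · -- y < x, E y x ; z < y, E z y
      exact Or.inr ⟨h3.trans h1, hcls z y x h4 h2⟩
  have htri : ∀ x y : Fin n, x ≠ y → prec x y ∨ prec y x := by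
    intro x y hxy
    rcases lt_or_gt_of_ne hxy with h | h
    · by_cases hE : E x y
      · exact Or.inr (Or.inr ⟨h, hE⟩)
      · exact Or.inl (Or.inl ⟨h, hE⟩)
    · by_cases hE : E y x
      · exact Or.inl (Or.inr ⟨h, hE⟩)
      · exact Or.inr (Or.inl ⟨h, hE⟩)
  let pos : Fin n → ℕ := fun b => (Finset.univ.filter (fun a => prec a b)).card
  have hmono : ∀ b c, prec b c → pos b < pos c := by
    intro b c h
    apply Finset.card_lt_card
    rw [Finset.ssubset_def]
    constructor
    · intro a ha
      simp only [Finset.mem_filter, Finset.mem_univ, true_and] at ha ⊢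
      exact htrans _ _ _ ha h
    · intro hsub
      have hb : b ∈ Finset.univ.filter (fun a => prec a c) := by
        simp only [Finset.mem_filter, Finset.mem_univ, true_and]; exact h
      have hbb := hsub hb
      simp only [Finset.mem_filter, Finset.mem_univ, true_and] at hbb
      exact hirr b hbb
  have hposlt : ∀ b, pos b < n := by
    intro b
    have : (Finset.univ.filter (fun a => prec a b)) ⊂ Finset.univ := by
      rw [Finset.ssubset_univ_iff]
      intro h
      have hb : b ∈ Finset.univ.filter (fun a => prec a b) := by
        rw [h]; exact Finset.mem_univ b
      simp only [Finset.mem_filter] at hb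
      exact hirr b hb.2
    simpa using Finset.card_lt_card this
  let posF : Fin n → Fin n := fun b => ⟨pos b, hposlt b⟩
  have hinj : Function.Injective posF := by
    intro b c h
    by_contra hne
    rcases htri b c hne with hp | hp
    · exact absurd (congrArg Fin.val h) (hmono b c hp).ne
    · exact absurd (congrArg Fin.val h).symm (hmono c b hp).ne
  let π : Equiv.Perm (Fin n) := Equiv.ofBijective posF (Finite.injective_iff_bijective.mp hinj)
  refine ⟨π.symm, fun a b => ?_⟩
  have hπ : ∀ x, π.symm⁻¹ x = posF x := fun x => rfl
  have hlt : ∀ x y, posF y < posF x ↔ prec y x := by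
    intro x y
    constructor
    · intro h
      rcases eq_or_ne y x with rfl | hne
      · exact absurd h (lt_irrefl _)
      · rcases htri y x hne with hp | hp
        · exact hp
        · exact absurd h (not_lt.mpr (le_of_lt (hmono x y hp)))
    · intro h
      exact hmono y x h
  constructor
  · rintro ⟨hab, hlt'⟩
    rw [hπ, hπ, hlt] at hlt'
    rcases hlt' with ⟨h1, h2⟩ | ⟨h1, h2⟩
    · exact absurd hab (not_lt.mpr h1.le)
    · exact h2
  · intro hE
    have hab := hinc a b hE
    refine ⟨hab, ?_⟩
    rw [hπ, hπ, hlt]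
    exact Or.inr ⟨hab, hE⟩

lemma exists_perm_avoiding (E : Fin n → Fin n → Prop)
    (hinc : ∀ a b, E a b → a < b)
    (hcls : ∀ a b c, E a b → E b c → E a c)
    (hcocls : ∀ a b c, a < b → b < c → E a c → E a b ∨ E b c)
    (hav : ∀ a b c, a < b → b < c → E a c → E a b) :
    ∃ μ : Equiv.Perm (Fin n), Avoids312 n μ ∧ ∀ a b, relE μ a b ↔ E a b := by
  obtain ⟨μ, hμ⟩ := exists_perm E hinc hcls hcocls
  refine ⟨μ, avoids_of_av' (fun a b c hab hbc hac =>
    (hμ a b).mpr (hav a b c hab hbc ((hμ a c).mp hac))), hμ⟩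

end Avoid312Aux

open Avoid312Aux Relation

/-- 312-avoiding permutations form a sublattice of the right weak order
(the Tamari lattice): two 312-avoiding permutations have a least upper bound
in the right weak order on all permutations, which avoids 312, and a greatest
lower bound, which also avoids 312. -/
theorem avoid312_sublattice_weak_order (n : ℕ) (σ τ : Equiv.Perm (Fin n))
    (hσ : Avoids312 n σ) (hτ : Avoids312 n τ) :
    (∃ μ : Equiv.Perm (Fin n), Avoids312 n μ ∧
      invSet n σ ⊆ invSet n μ ∧ invSet n τ ⊆ invSet n μ ∧
      ∀ ρ : Equiv.Perm (Fin n),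
        invSet n σ ⊆ invSet n ρ → invSet n τ ⊆ invSet n ρ → invSet n μ ⊆ invSet n ρ) ∧
    (∃ μ : Equiv.Perm (Fin n), Avoids312 n μ ∧
      invSet n μ ⊆ invSet n σ ∧ invSet n μ ⊆ invSet n τ ∧
      ∀ ρ : Equiv.Perm (Fin n),
        invSet n ρ ⊆ invSet n σ → invSet n ρ ⊆ invSet n τ → invSet n ρ ⊆ invSet n μ) := by
  classical
  constructor
  · -- join
    set J : Fin n → Fin n → Prop :=
      TransGen (fun x y => relE σ x y ∨ relE τ x y) with hJ
    have hincJ : ∀ a b, J a b → a < b :=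
      inc_tg (fun a b h => h.1) (fun a b h => h.1)
    have hclsJ : ∀ a b c, J a b → J b c → J a c := fun a b c h1 h2 => h1.trans h2
    have hcoclsJ : ∀ a b c, a < b → b < c → J a c → J a b ∨ J b c := by
      intro a b c hab hbc hac
      exact cocls_tg (relE_cocls σ) (relE_cocls τ) a b c hab hac hbc
    have havJ : ∀ a b c, a < b → b < c → J a c → J a b := by
      intro a b c hab hbc hac
      exact down_tg (relE_av' hσ) (relE_av' hτ) a b c hab hac hbc
    obtain ⟨μ, hμav, hμ⟩ := exists_perm_avoiding J hincJ hclsJ hcoclsJ havJ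
    refine ⟨μ, hμav, ?_, ?_, ?_⟩
    · exact invSet_subset_iff.mpr fun a b h => (hμ a b).mpr (TransGen.single (Or.inl h))
    · exact invSet_subset_iff.mpr fun a b h => (hμ a b).mpr (TransGen.single (Or.inr h))
    · intro ρ hρσ hρτ
      rw [invSet_subset_iff] at hρσ hρτ ⊢
      intro a b h
      exact tg_subset (fun a b c h1 h2 => ⟨h1.1.trans h2.1, h2.2.trans h1.2⟩)
        hρσ hρτ a b ((hμ a b).mp h)
  · -- meet
    set Dσ : Fin n → Fin n → Prop := fun a b => a < b ∧ ¬ relE σ a b with hDσ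
    set Dτ : Fin n → Fin n → Prop := fun a b => a < b ∧ ¬ relE τ a b with hDτ
    set K : Fin n → Fin n → Prop := TransGen (fun x y => Dσ x y ∨ Dτ x y) with hK
    have hcoclsD : ∀ (ν : Equiv.Perm (Fin n)), ∀ a b c : Fin n, a < b → b < c →
        (a < c ∧ ¬ relE ν a c) → (a < b ∧ ¬ relE ν a b) ∨ (b < c ∧ ¬ relE ν b c) := by
      intro ν a b c hab hbc hac
      by_contra h
      push_neg at h
      exact hac.2 ⟨hac.1, ((h.2 hbc).2.trans (h.1 hab).2)⟩
    have hupD : ∀ (ν : Equiv.Perm (Fin n)), Avoids312 n ν → ∀ a b c : Fin n,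
        (a < b ∧ ¬ relE ν a b) → b < c → (a < c ∧ ¬ relE ν a c) := by
      intro ν hν a b c hab hbc
      exact ⟨hab.1.trans hbc, fun h => hab.2 (relE_av' hν a b c hab.1 hbc h)⟩
    have hcoclsK : ∀ a b c, a < b → b < c → K a c → K a b ∨ K b c := by
      intro a b c hab hbc hac
      exact cocls_tg (hcoclsD σ) (hcoclsD τ) a b c hab hac hbc
    have hupK : ∀ a b c, K a b → b < c → K a c :=
      fun a b c h hbc => up_tg (hupD σ hσ) (hupD τ hτ) a b c h hbc
    set M : Fin n → Fin n → Prop := fun a b => a < b ∧ ¬ K a b with hM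
    have hincM : ∀ a b, M a b → a < b := fun a b h => h.1
    have hclsM : ∀ a b c, M a b → M b c → M a c := by
      intro a b c h1 h2
      refine ⟨h1.1.trans h2.1, fun h => ?_⟩
      rcases hcoclsK a b c h1.1 h2.1 h with h | h
      exacts [h1.2 h, h2.2 h]
    have hcoclsM : ∀ a b c, a < b → b < c → M a c → M a b ∨ M b c := by
      intro a b c hab hbc hac
      by_cases hk : K a b
      · exact Or.inr ⟨hbc, fun h2 => hac.2 (hk.trans h2)⟩
      · exact Or.inl ⟨hab, hk⟩
    have havM : ∀ a b c, a < b → b < c → M a c → M a b := by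
      intro a b c hab hbc hac
      exact ⟨hab, fun h => hac.2 (hupK a b c h hbc)⟩
    obtain ⟨μ, hμav, hμ⟩ := exists_perm_avoiding M hincM hclsM hcoclsM havM
    refine ⟨μ, hμav, ?_, ?_, ?_⟩
    · refine invSet_subset_iff.mpr fun a b h => ?_
      have hm := (hμ a b).mp h
      by_contra hc
      exact hm.2 (TransGen.single (Or.inl ⟨hm.1, hc⟩))
    · refine invSet_subset_iff.mpr fun a b h => ?_
      have hm := (hμ a b).mp h
      by_contra hc
      exact hm.2 (TransGen.single (Or.inr ⟨hm.1, hc⟩))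
    · intro ρ hρσ hρτ
      rw [invSet_subset_iff] at hρσ hρτ ⊢
      intro a b h
      refine (hμ a b).mpr ⟨h.1, fun hk => ?_⟩
      rw [hK] at hk
      have hDρ : (fun x y : Fin n => x < y ∧ ¬ relE ρ x y) a b := by
        refine tg_subset (g := fun x y : Fin n => x < y ∧ ¬ relE ρ x y) ?_ ?_ ?_ a b hk
        · intro a b c h1 h2
          refine ⟨h1.1.trans h2.1, fun hr => ?_⟩
          rcases relE_cocls ρ a b c h1.1 h2.1 hr with hh | hh
          exacts [h1.2 hh, h2.2 hh]
        · exact fun a b hd => ⟨hd.1, fun hr => hd.2 (hρσ a b hr)⟩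
        · exact fun a b hd => ⟨hd.1, fun hr => hd.2 (hρτ a b hr)⟩
      exact hDρ.2 h
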